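/- Let f, g : ℝ^n × ℝ^n → ℂ be smooth and ℤ^{2n}-periodic. Then for every integer j ≥ 0, ∫_{[0,1]^{2n}} C_j(f,g)(x,y) d^n x d^n y = ∫_{[0,1]^{2n}} C_j(g,f)(x,y) d^n x d^n y, and likewise ∫_{[0,1]^{2n}} Č_j(f,g) = ∫_{[0,1]^{2n}} Č_j(g,f). (Consequently the functional Tr(f) = ∫_X f e^{ω/ℏ} is a trace map for both star products ⋆ and ⋆̌.) -/

import Mathlib

open MeasureTheory Complex
open scoped Real

noncomputable section

/-- The unit box `[0,1]^n` in `ℝ^n`. -/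
def box (n : ℕ) : Set (Fin n → ℝ) := Set.univ.pi fun _ => Set.Icc (0:ℝ) 1

/-- `ℤ^{2n}`-periodicity of a function `f(x,y)` on `ℝ^n × ℝ^n`. -/
def IsPeriodic2 (n : ℕ) (f : (Fin n → ℝ) × (Fin n → ℝ) → ℂ) : Prop :=
  ∀ (x y : Fin n → ℝ) (a b : Fin n → ℤ),
    f (x + fun i => (a i : ℝ), y + fun i => (b i : ℝ)) = f (x, y)

/-- The `m`-th fibrewise Fourier coefficient
`f̂_m(y) = ∫_{[0,1]^n} f(x,y) e^{-2π√-1 m·x} dx`. -/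
def fhat (n : ℕ) (f : (Fin n → ℝ) × (Fin n → ℝ) → ℂ) (m : Fin n → ℤ) (y : Fin n → ℝ) : ℂ :=
  ∫ x in box n, f (x, y) * Complex.exp (-2 * π * Complex.I * ∑ i, (m i : ℂ) * (x i : ℂ))

/-- `N_m = ∏_{i : m_i ≠ 0} 1/(2π√-1 m_i)`. -/
def Nm (n : ℕ) (m : Fin n → ℤ) : ℂ :=
  ∏ i ∈ Finset.univ.filter (fun i => m i ≠ 0), (1 / (2 * π * Complex.I * (m i : ℂ)))
/-- Partial derivative `∂/∂x^i` of a function `f(x,y)` on `ℝ^n × ℝ^n`. -/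
def pderivX (n : ℕ) (i : Fin n) (f : (Fin n → ℝ) × (Fin n → ℝ) → ℂ) :
    (Fin n → ℝ) × (Fin n → ℝ) → ℂ :=
  fun p => fderiv ℝ f p (Pi.single i (1:ℝ), 0)

/-- Partial derivative `∂/∂y^i` of a function `f(x,y)` on `ℝ^n × ℝ^n`. -/
def pderivY (n : ℕ) (i : Fin n) (f : (Fin n → ℝ) × (Fin n → ℝ) → ℂ) :
    (Fin n → ℝ) × (Fin n → ℝ) → ℂ :=
  fun p => fderiv ℝ f p (0, Pi.single i (1:ℝ))

/-- Iterated `x`-derivative `∂^j/∂x^{i_1}⋯∂x^{i_j}` along a list of indices. -/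
def derivX (n : ℕ) (l : List (Fin n)) (f : (Fin n → ℝ) × (Fin n → ℝ) → ℂ) :
    (Fin n → ℝ) × (Fin n → ℝ) → ℂ :=
  l.foldr (pderivX n) f

/-- Iterated `y`-derivative `∂^j/∂y^{i_1}⋯∂y^{i_j}` along a list of indices. -/
def derivY (n : ℕ) (l : List (Fin n)) (f : (Fin n → ℝ) × (Fin n → ℝ) → ℂ) :
    (Fin n → ℝ) × (Fin n → ℝ) → ℂ :=
  l.foldr (pderivY n) f

/-- `C_j(f,g) = (1/(j!·(2π√-1)^j)) Σ_{i_1,…,i_j} (∂^j f/∂y^{i_1}⋯∂y^{i_j})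
(∂^j g/∂x^{i_1}⋯∂x^{i_j})`. -/
def Cop (n j : ℕ) (f g : (Fin n → ℝ) × (Fin n → ℝ) → ℂ) :
    (Fin n → ℝ) × (Fin n → ℝ) → ℂ :=
  fun p => (1 / ((Nat.factorial j : ℂ) * (2 * π * Complex.I) ^ j)) *
    ∑ v : Fin j → Fin n, derivY n (List.ofFn v) f p * derivX n (List.ofFn v) g p

/-- `Č_j(f,g) = ((√-1)^j/((2π)^j j!)) Σ_{i_1,…,i_j} (∂^j f/∂x^{i_1}⋯∂x^{i_j})
(∂^j g/∂y^{i_1}⋯∂y^{i_j})`. -/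
def CopCheck (n j : ℕ) (f g : (Fin n → ℝ) × (Fin n → ℝ) → ℂ) :
    (Fin n → ℝ) × (Fin n → ℝ) → ℂ :=
  fun p => (Complex.I ^ j / ((2 * (π : ℂ)) ^ j * (Nat.factorial j : ℂ))) *
    ∑ v : Fin j → Fin n, derivX n (List.ofFn v) f p * derivY n (List.ofFn v) g p

/-! ### Auxiliary lemmas -/

section Aux

lemma box_eq (n : ℕ) : box n = Set.Icc (0 : Fin n → ℝ) 1 := by
  rw [← Set.pi_univ_Icc]; rfl

lemma box_compact (n : ℕ) : IsCompact (box n) := box_eq n ▸ isCompact_Icc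

lemma box_meas (n : ℕ) : MeasurableSet (box n) := box_eq n ▸ measurableSet_Icc

lemma contDiff_fderiv_apply' {V : Type*} [NormedAddCommGroup V] [NormedSpace ℝ V]
    {f : V → ℂ} (hf : ContDiff ℝ (⊤:ℕ∞) f) (v : V) :
    ContDiff ℝ (⊤:ℕ∞) (fun p => fderiv ℝ f p v) :=
  (hf.fderiv_right (by exact_mod_cast le_refl _ : ((⊤:ℕ∞):WithTop ℕ∞)+1 ≤ _)).clm_apply
    contDiff_const

lemma fderiv_shift {V : Type*} [NormedAddCommGroup V] [NormedSpace ℝ V]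
    {f : V → ℂ} (hf : Differentiable ℝ f) {c : V}
    (hc : ∀ p, f (p + c) = f p) (p : V) :
    fderiv ℝ f (p + c) = fderiv ℝ f p := by
  have h1 : HasFDerivAt (fun q => f (q + c)) (fderiv ℝ f (p + c)) p := by
    simpa [Function.comp_def] using (hf (p + c)).hasFDerivAt.comp p ((hasFDerivAt_id p).add_const c)
  rw [funext hc] at h1
  exact h1.fderiv.symm

lemma fderiv2_symm {V : Type*} [NormedAddCommGroup V] [NormedSpace ℝ V]
    {f : V → ℂ} (hf : ContDiff ℝ (⊤:ℕ∞) f) (p a b : V) :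
    fderiv ℝ (fun q => fderiv ℝ f q b) p a = fderiv ℝ (fun q => fderiv ℝ f q a) p b := by
  have hdf : Differentiable ℝ (fderiv ℝ f) :=
    (hf.fderiv_right (by exact_mod_cast le_refl _ : ((⊤:ℕ∞):WithTop ℕ∞)+1 ≤ _)).differentiable
      (by simp)
  have key : ∀ v, fderiv ℝ (fun q => fderiv ℝ f q v) p
      = (fderiv ℝ (fderiv ℝ f) p).flip v := by
    intro v
    rw [show (fun q => fderiv ℝ f q v) = fun q => (fderiv ℝ f q) ((fun _ => v) q) from rfl,
      fderiv_clm_apply (hdf p) (differentiableAt_const v)]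
    simp
  rw [key, key]
  exact (hf.contDiffAt.isSymmSndFDerivAt
    (by rw [minSmoothness_of_isRCLikeNormedField]; exact (WithTop.coe_le_coe.2 le_top : ((2:ℕ∞):WithTop ℕ∞) ≤ _))) a b

lemma insertNth_one_eq {m : ℕ} (i : Fin (m+1)) (x : Fin m → ℝ) :
    i.insertNth (1:ℝ) x = i.insertNth (0:ℝ) x + fun k => if k = i then (1:ℝ) else 0 := by
  funext j
  refine Fin.succAboveCases i ?_ ?_ j
  · simp
  · intro k
    simp [Fin.insertNth_apply_succAbove, Fin.succAbove_ne i k]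

lemma integral_box_fderiv_single {m : ℕ} (G : (Fin (m+1) → ℝ) → ℂ)
    (hG : ContDiff ℝ (⊤:ℕ∞) G) (i : Fin (m+1))
    (hper : ∀ y, G (y + fun k => if k = i then (1:ℝ) else 0) = G y) :
    ∫ y in box (m+1), fderiv ℝ G y (Pi.single i 1) = 0 := by
  have hGd : Differentiable ℝ G := hG.differentiable (by simp)
  set L : ℂ →L[ℝ] (Fin (m+1) → ℂ) :=
    ContinuousLinearMap.pi (fun j => if j = i then ContinuousLinearMap.id ℝ ℂ else 0) with hL
  have hLapp : ∀ (c : ℂ) (j : Fin (m+1)), L c j = if j = i then c else 0 := by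
    intro c j
    simp only [hL, ContinuousLinearMap.pi_apply]
    by_cases h : j = i <;> simp [h]
  set f : (Fin (m+1) → ℝ) → Fin (m+1) → ℂ := fun y => L (G y) with hf
  set f' : (Fin (m+1) → ℝ) → (Fin (m+1) → ℝ) →L[ℝ] (Fin (m+1) → ℂ) :=
    fun y => L.comp (fderiv ℝ G y) with hf'
  have hdiv : ∀ x, (∑ j, f' x (Pi.single j 1) j) = fderiv ℝ G x (Pi.single i 1) := by
    intro x
    have : ∀ j : Fin (m+1), f' x (Pi.single j 1) j
        = if j = i then fderiv ℝ G x (Pi.single j 1) else 0 := by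
      intro j
      simp only [hf', ContinuousLinearMap.comp_apply]
      exact hLapp _ j
    rw [Finset.sum_congr rfl (fun j _ => this j)]
    simp
  have key := MeasureTheory.integral_divergence_of_hasFDerivAt_off_countable
    (a := (0 : Fin (m+1) → ℝ)) (b := (1 : Fin (m+1) → ℝ)) zero_le_one
    f f' ∅ Set.countable_empty ((L.continuous.comp hG.continuous).continuousOn)
    (fun x _ => L.hasFDerivAt.comp x (hGd x).hasFDerivAt)
    (by
      refine (ContinuousOn.integrableOn_compact isCompact_Icc ?_)
      have := (contDiff_fderiv_apply' hG (Pi.single i 1)).continuous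
      exact (this.congr (fun x => (hdiv x).symm)).continuousOn)
  rw [box_eq]
  calc ∫ y in Set.Icc (0:Fin (m+1) → ℝ) 1, fderiv ℝ G y (Pi.single i 1)
      = ∫ y in Set.Icc (0:Fin (m+1) → ℝ) 1, ∑ j, f' y (Pi.single j 1) j := by
        exact setIntegral_congr_fun (measurableSet_Icc) (fun y _ => (hdiv y).symm)
    _ = 0 := by
        rw [key]
        refine Finset.sum_eq_zero (fun j _ => ?_)
        by_cases h : j = i
        · subst h
          have hint : ∀ x : Fin m → ℝ,
              f (j.insertNth ((1:Fin (m+1) → ℝ) j) x) j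
                = f (j.insertNth ((0:Fin (m+1) → ℝ) j) x) j := by
            intro x
            simp only [hf, hLapp, if_pos rfl, Pi.one_apply, Pi.zero_apply]
            rw [insertNth_one_eq, hper]
          rw [setIntegral_congr_fun (measurableSet_Icc) (fun x _ => hint x), sub_self]
        · have h0 : ∀ (t : Fin (m+1) → ℝ) (x : Fin m → ℝ),
              f (j.insertNth (t j) x) j = 0 := by
            intro t x
            simp [hf, hLapp, h]
          rw [setIntegral_congr_fun (measurableSet_Icc) (fun x _ => h0 1 x),
            setIntegral_congr_fun (measurableSet_Icc) (fun x _ => h0 0 x)]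
          simp

variable {n : ℕ}

lemma smooth_pderivX {F} (hF : ContDiff ℝ (⊤:ℕ∞) F) (i : Fin n) :
    ContDiff ℝ (⊤:ℕ∞) (pderivX n i F) := contDiff_fderiv_apply' hF _

lemma smooth_pderivY {F} (hF : ContDiff ℝ (⊤:ℕ∞) F) (i : Fin n) :
    ContDiff ℝ (⊤:ℕ∞) (pderivY n i F) := contDiff_fderiv_apply' hF _

lemma per_shift {F : (Fin n → ℝ) × (Fin n → ℝ) → ℂ} (hper : IsPeriodic2 n F)
    (a b : Fin n → ℤ) (p : (Fin n → ℝ) × (Fin n → ℝ)) :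
    F (p + ((fun i => ((a i : ℤ) : ℝ)), fun i => ((b i : ℤ) : ℝ))) = F p :=
  hper p.1 p.2 a b

lemma per_pderivX {F} (hF : ContDiff ℝ (⊤:ℕ∞) F) (hper : IsPeriodic2 n F) (i : Fin n) :
    IsPeriodic2 n (pderivX n i F) := by
  intro x y a b
  have h := fderiv_shift (hF.differentiable (by simp))
    (c := ((fun i => ((a i : ℤ) : ℝ)), fun i => ((b i : ℤ) : ℝ))) (per_shift hper a b) (x, y)
  exact congrFun (congrArg DFunLike.coe h) _

lemma per_pderivY {F} (hF : ContDiff ℝ (⊤:ℕ∞) F) (hper : IsPeriodic2 n F) (i : Fin n) :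
    IsPeriodic2 n (pderivY n i F) := by
  intro x y a b
  have h := fderiv_shift (hF.differentiable (by simp))
    (c := ((fun i => ((a i : ℤ) : ℝ)), fun i => ((b i : ℤ) : ℝ))) (per_shift hper a b) (x, y)
  exact congrFun (congrArg DFunLike.coe h) _

lemma pderivY_slice {F} (hFd : Differentiable ℝ F) (x y : Fin n → ℝ) (i : Fin n) :
    pderivY n i F (x, y) = fderiv ℝ (fun y' => F (x, y')) y (Pi.single i 1) := by
  have h : HasFDerivAt (fun y' => F (x, y'))
      ((fderiv ℝ F (x, y)).comp
        ((0 : (Fin n → ℝ) →L[ℝ] (Fin n → ℝ)).prod (ContinuousLinearMap.id ℝ _))) y :=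
    HasFDerivAt.comp y (hFd (x, y)).hasFDerivAt (HasFDerivAt.prodMk (hasFDerivAt_const x y) (hasFDerivAt_id y))
  rw [h.fderiv]
  rfl

lemma pderivX_slice {F} (hFd : Differentiable ℝ F) (x y : Fin n → ℝ) (i : Fin n) :
    pderivX n i F (x, y) = fderiv ℝ (fun x' => F (x', y)) x (Pi.single i 1) := by
  have h : HasFDerivAt (fun x' => F (x', y))
      ((fderiv ℝ F (x, y)).comp
        ((ContinuousLinearMap.id ℝ _).prod (0 : (Fin n → ℝ) →L[ℝ] (Fin n → ℝ)))) x :=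
    HasFDerivAt.comp x (hFd (x, y)).hasFDerivAt (HasFDerivAt.prodMk (hasFDerivAt_id x) (hasFDerivAt_const y x))
  rw [h.fderiv]
  rfl

lemma coe_single_int (i : Fin n) :
    (fun k => (((if k = i then (1:ℤ) else 0) : ℤ) : ℝ)) = fun k => if k = i then (1:ℝ) else 0 := by
  funext k; by_cases h : k = i <;> simp [h]

lemma intY_zero (i : Fin n) {F} (hF : ContDiff ℝ (⊤:ℕ∞) F) (hper : IsPeriodic2 n F) :
    ∫ p in (box n) ×ˢ (box n), pderivY n i F p = 0 := by
  cases n with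
  | zero => exact i.elim0
  | succ m =>
    have hFd : Differentiable ℝ F := hF.differentiable (by simp)
    have hcont : Continuous (pderivY (m+1) i F) := (smooth_pderivY hF i).continuous
    have hint : MeasureTheory.IntegrableOn (pderivY (m+1) i F) ((box (m+1)) ×ˢ (box (m+1)))
        ((volume).prod volume) := by
      rw [← MeasureTheory.Measure.volume_eq_prod]
      exact hcont.continuousOn.integrableOn_compact ((box_compact _).prod (box_compact _))
    rw [MeasureTheory.Measure.volume_eq_prod, MeasureTheory.setIntegral_prod _ hint]
    have hslice : ∀ x, (∫ y in box (m+1), pderivY (m+1) i F (x, y)) = 0 := by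
      intro x
      have hGx : ContDiff ℝ (⊤:ℕ∞) (fun y => F (x, y)) :=
        hF.comp (contDiff_const.prodMk contDiff_id)
      have hpx : ∀ y, (fun y' => F (x, y')) (y + fun k => if k = i then (1:ℝ) else 0)
          = F (x, y) := by
        intro y
        have := hper x y 0 (fun k => if k = i then (1:ℤ) else 0)
        have h0 : (fun k => (((0 : Fin (m+1) → ℤ) k : ℤ) : ℝ)) = (0 : Fin (m+1) → ℝ) := by
          funext k; simp
        rw [coe_single_int, h0, add_zero] at this
        exact this
      rw [setIntegral_congr_fun (box_meas _) (fun y _ => pderivY_slice hFd x y i)]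
      exact integral_box_fderiv_single _ hGx i hpx
    simp only [hslice]
    simp

lemma intX_zero (i : Fin n) {F} (hF : ContDiff ℝ (⊤:ℕ∞) F) (hper : IsPeriodic2 n F) :
    ∫ p in (box n) ×ˢ (box n), pderivX n i F p = 0 := by
  cases n with
  | zero => exact i.elim0
  | succ m =>
    have hFd : Differentiable ℝ F := hF.differentiable (by simp)
    have hcont : Continuous (pderivX (m+1) i F) := (smooth_pderivX hF i).continuous
    have hint : MeasureTheory.Integrable (pderivX (m+1) i F)
        (((volume : MeasureTheory.Measure (Fin (m+1) → ℝ)).restrict (box (m+1))).prod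
          ((volume : MeasureTheory.Measure (Fin (m+1) → ℝ)).restrict (box (m+1)))) := by
      rw [MeasureTheory.Measure.prod_restrict]
      have : MeasureTheory.IntegrableOn (pderivX (m+1) i F) ((box (m+1)) ×ˢ (box (m+1))) :=
        hcont.continuousOn.integrableOn_compact ((box_compact _).prod (box_compact _))
      rwa [MeasureTheory.IntegrableOn, MeasureTheory.Measure.volume_eq_prod] at this
    rw [MeasureTheory.Measure.volume_eq_prod, ← MeasureTheory.Measure.prod_restrict,
      MeasureTheory.integral_prod_symm _ hint]
    have hslice : ∀ y, (∫ x in box (m+1), pderivX (m+1) i F (x, y)) = 0 := by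
      intro y
      have hGy : ContDiff ℝ (⊤:ℕ∞) (fun x => F (x, y)) :=
        hF.comp (contDiff_id.prodMk contDiff_const)
      have hpx : ∀ x, (fun x' => F (x', y)) (x + fun k => if k = i then (1:ℝ) else 0)
          = F (x, y) := by
        intro x
        have := hper x y (fun k => if k = i then (1:ℤ) else 0) 0
        have h0 : (fun k => (((0 : Fin (m+1) → ℤ) k : ℤ) : ℝ)) = (0 : Fin (m+1) → ℝ) := by
          funext k; simp
        rw [coe_single_int, h0, add_zero] at this
        exact this
      rw [setIntegral_congr_fun (box_meas _) (fun x _ => pderivX_slice hFd x y i)]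
      exact integral_box_fderiv_single _ hGy i hpx
    simp only [hslice]
    simp

end Aux

section Aux2

variable {n : ℕ}

lemma intble_box2 {φ : (Fin n → ℝ) × (Fin n → ℝ) → ℂ} (h : Continuous φ) :
    MeasureTheory.IntegrableOn φ ((box n) ×ˢ (box n)) :=
  h.continuousOn.integrableOn_compact ((box_compact n).prod (box_compact n))

lemma pderiv_mul_apply {u w : (Fin n → ℝ) × (Fin n → ℝ) → ℂ}
    (hu : Differentiable ℝ u) (hw : Differentiable ℝ w)
    (p v) :
    fderiv ℝ (fun q => u q * w q) p v = fderiv ℝ u p v * w p + u p * fderiv ℝ w p v := by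
  rw [fderiv_fun_mul (hu p) (hw p)]
  simp [smul_eq_mul]
  ring

lemma per_mul {u w : (Fin n → ℝ) × (Fin n → ℝ) → ℂ}
    (hu : IsPeriodic2 n u) (hw : IsPeriodic2 n w) :
    IsPeriodic2 n (fun p => u p * w p) := by
  intro x y a b
  show u _ * w _ = u _ * w _
  rw [hu x y a b, hw x y a b]

lemma ibpY (i : Fin n) {u w : (Fin n → ℝ) × (Fin n → ℝ) → ℂ}
    (hu : ContDiff ℝ (⊤:ℕ∞) u) (hw : ContDiff ℝ (⊤:ℕ∞) w)
    (hpu : IsPeriodic2 n u) (hpw : IsPeriodic2 n w) :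
    (∫ p in (box n) ×ˢ (box n), pderivY n i u p * w p)
      = - ∫ p in (box n) ×ˢ (box n), u p * pderivY n i w p := by
  have hud : Differentiable ℝ u := hu.differentiable (by simp)
  have hwd : Differentiable ℝ w := hw.differentiable (by simp)
  have h0 := intY_zero i (hu.mul hw) (per_mul hpu hpw)
  have heq : ∀ p, pderivY n i (fun q => u q * w q) p
      = pderivY n i u p * w p + u p * pderivY n i w p :=
    fun p => pderiv_mul_apply hud hwd p _
  rw [setIntegral_congr_fun ((box_meas n).prod (box_meas n)) (fun p _ => heq p)] at h0
  rw [MeasureTheory.integral_add (f := fun p => pderivY n i u p * w p) (g := fun p => u p * pderivY n i w p)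
    (intble_box2 (((smooth_pderivY hu i).continuous).mul hw.continuous))
    (intble_box2 (hu.continuous.mul ((smooth_pderivY hw i).continuous)))] at h0
  exact eq_neg_of_add_eq_zero_left h0

lemma ibpX (i : Fin n) {u w : (Fin n → ℝ) × (Fin n → ℝ) → ℂ}
    (hu : ContDiff ℝ (⊤:ℕ∞) u) (hw : ContDiff ℝ (⊤:ℕ∞) w)
    (hpu : IsPeriodic2 n u) (hpw : IsPeriodic2 n w) :
    (∫ p in (box n) ×ˢ (box n), pderivX n i u p * w p)
      = - ∫ p in (box n) ×ˢ (box n), u p * pderivX n i w p := by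
  have hud : Differentiable ℝ u := hu.differentiable (by simp)
  have hwd : Differentiable ℝ w := hw.differentiable (by simp)
  have h0 := intX_zero i (hu.mul hw) (per_mul hpu hpw)
  have heq : ∀ p, pderivX n i (fun q => u q * w q) p
      = pderivX n i u p * w p + u p * pderivX n i w p :=
    fun p => pderiv_mul_apply hud hwd p _
  rw [setIntegral_congr_fun ((box_meas n).prod (box_meas n)) (fun p _ => heq p)] at h0
  rw [MeasureTheory.integral_add (f := fun p => pderivX n i u p * w p) (g := fun p => u p * pderivX n i w p)
    (intble_box2 (((smooth_pderivX hu i).continuous).mul hw.continuous))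
    (intble_box2 (hu.continuous.mul ((smooth_pderivX hw i).continuous)))] at h0
  exact eq_neg_of_add_eq_zero_left h0

lemma pdXY_comm (i i' : Fin n) {F} (hF : ContDiff ℝ (⊤:ℕ∞) F) :
    pderivX n i (pderivY n i' F) = pderivY n i' (pderivX n i F) :=
  funext fun p => fderiv2_symm hF p (Pi.single i 1, 0) (0, Pi.single i' 1)

lemma pdYX_comm (i i' : Fin n) {F} (hF : ContDiff ℝ (⊤:ℕ∞) F) :
    pderivY n i (pderivX n i' F) = pderivX n i' (pderivY n i F) :=
  funext fun p => fderiv2_symm hF p (0, Pi.single i 1) (Pi.single i' 1, 0)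

lemma pdXX_comm (i i' : Fin n) {F} (hF : ContDiff ℝ (⊤:ℕ∞) F) :
    pderivX n i (pderivX n i' F) = pderivX n i' (pderivX n i F) :=
  funext fun p => fderiv2_symm hF p (Pi.single i 1, 0) (Pi.single i' 1, 0)

lemma pdYY_comm (i i' : Fin n) {F} (hF : ContDiff ℝ (⊤:ℕ∞) F) :
    pderivY n i (pderivY n i' F) = pderivY n i' (pderivY n i F) :=
  funext fun p => fderiv2_symm hF p (0, Pi.single i 1) (0, Pi.single i' 1)

lemma smooth_derivX (l : List (Fin n)) {F} (hF : ContDiff ℝ (⊤:ℕ∞) F) :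
    ContDiff ℝ (⊤:ℕ∞) (derivX n l F) := by
  induction l with
  | nil => exact hF
  | cons i l ih => exact smooth_pderivX ih i

lemma smooth_derivY (l : List (Fin n)) {F} (hF : ContDiff ℝ (⊤:ℕ∞) F) :
    ContDiff ℝ (⊤:ℕ∞) (derivY n l F) := by
  induction l with
  | nil => exact hF
  | cons i l ih => exact smooth_pderivY ih i

lemma per_derivX (l : List (Fin n)) {F} (hF : ContDiff ℝ (⊤:ℕ∞) F)
    (hper : IsPeriodic2 n F) : IsPeriodic2 n (derivX n l F) := by
  induction l with
  | nil => exact hper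
  | cons i l ih => exact per_pderivX (smooth_derivX l hF) ih i

lemma per_derivY (l : List (Fin n)) {F} (hF : ContDiff ℝ (⊤:ℕ∞) F)
    (hper : IsPeriodic2 n F) : IsPeriodic2 n (derivY n l F) := by
  induction l with
  | nil => exact hper
  | cons i l ih => exact per_pderivY (smooth_derivY l hF) ih i

lemma derivX_pderivY_comm (l : List (Fin n)) (i : Fin n) {F} (hF : ContDiff ℝ (⊤:ℕ∞) F) :
    derivX n l (pderivY n i F) = pderivY n i (derivX n l F) := by
  induction l with
  | nil => rfl
  | cons j l ih =>
    show pderivX n j (derivX n l (pderivY n i F)) = _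
    rw [ih]
    exact pdXY_comm j i (smooth_derivX l hF)

lemma derivY_pderivX_comm (l : List (Fin n)) (i : Fin n) {F} (hF : ContDiff ℝ (⊤:ℕ∞) F) :
    derivY n l (pderivX n i F) = pderivX n i (derivY n l F) := by
  induction l with
  | nil => rfl
  | cons j l ih =>
    show pderivY n j (derivY n l (pderivX n i F)) = _
    rw [ih]
    exact pdYX_comm j i (smooth_derivY l hF)

lemma derivX_pderivX_comm (l : List (Fin n)) (i : Fin n) {F} (hF : ContDiff ℝ (⊤:ℕ∞) F) :
    derivX n l (pderivX n i F) = pderivX n i (derivX n l F) := by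
  induction l with
  | nil => rfl
  | cons j l ih =>
    show pderivX n j (derivX n l (pderivX n i F)) = _
    rw [ih]
    exact pdXX_comm j i (smooth_derivX l hF)

lemma derivY_pderivY_comm (l : List (Fin n)) (i : Fin n) {F} (hF : ContDiff ℝ (⊤:ℕ∞) F) :
    derivY n l (pderivY n i F) = pderivY n i (derivY n l F) := by
  induction l with
  | nil => rfl
  | cons j l ih =>
    show pderivY n j (derivY n l (pderivY n i F)) = _
    rw [ih]
    exact pdYY_comm j i (smooth_derivY l hF)

lemma swap1 (i : Fin n) {u w : (Fin n → ℝ) × (Fin n → ℝ) → ℂ}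
    (hu : ContDiff ℝ (⊤:ℕ∞) u) (hw : ContDiff ℝ (⊤:ℕ∞) w)
    (hpu : IsPeriodic2 n u) (hpw : IsPeriodic2 n w) :
    (∫ p in (box n) ×ˢ (box n), pderivY n i u p * pderivX n i w p)
      = ∫ p in (box n) ×ˢ (box n), pderivX n i u p * pderivY n i w p := by
  rw [ibpY i hu (smooth_pderivX hw i) hpu (per_pderivX hw hpw i),
    ibpX i hu (smooth_pderivY hw i) hpu (per_pderivY hw hpw i),
    show pderivY n i (pderivX n i w) = pderivX n i (pderivY n i w) from
      pdYX_comm i i hw]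

lemma swapL (l : List (Fin n)) {u w : (Fin n → ℝ) × (Fin n → ℝ) → ℂ}
    (hu : ContDiff ℝ (⊤:ℕ∞) u) (hw : ContDiff ℝ (⊤:ℕ∞) w)
    (hpu : IsPeriodic2 n u) (hpw : IsPeriodic2 n w) :
    (∫ p in (box n) ×ˢ (box n), derivY n l u p * derivX n l w p)
      = ∫ p in (box n) ×ˢ (box n), derivX n l u p * derivY n l w p := by
  induction l generalizing u w with
  | nil => rfl
  | cons i l ih =>
    have e1 : derivY n (i :: l) u = derivY n l (pderivY n i u) :=
      (derivY_pderivY_comm l i hu).symm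
    have e2 : derivX n (i :: l) w = derivX n l (pderivX n i w) :=
      (derivX_pderivX_comm l i hw).symm
    have e3 : derivX n (i :: l) u = pderivX n i (derivX n l u) := rfl
    have e4 : derivY n (i :: l) w = pderivY n i (derivY n l w) := rfl
    rw [e1, e2,
      ih (smooth_pderivY hu i) (smooth_pderivX hw i)
        (per_pderivY hu hpu i) (per_pderivX hw hpw i),
      derivX_pderivY_comm l i hu, derivY_pderivX_comm l i hw,
      swap1 i (smooth_derivX l hu) (smooth_derivY l hw)
        (per_derivX l hu hpu) (per_derivY l hw hpw),
      e3, e4]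

end Aux2

/-- For smooth `ℤ^{2n}`-periodic `f, g` and every `j ≥ 0`,
`∫_{[0,1]^{2n}} C_j(f,g) = ∫_{[0,1]^{2n}} C_j(g,f)` and
`∫_{[0,1]^{2n}} Č_j(f,g) = ∫_{[0,1]^{2n}} Č_j(g,f)`; consequently
`Tr(f) = ∫_X f e^{ω/ℏ}` is a trace map for both `⋆` and `⋆̌`. -/
theorem statement12 (n : ℕ) (hn : 1 ≤ n) (f g : (Fin n → ℝ) × (Fin n → ℝ) → ℂ)
    (hf : ContDiff ℝ (⊤ : ℕ∞) f) (hg : ContDiff ℝ (⊤ : ℕ∞) g)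
    (hperf : IsPeriodic2 n f) (hperg : IsPeriodic2 n g) :
    ∀ j : ℕ,
      (∫ p in (box n) ×ˢ (box n), Cop n j f g p) =
        (∫ p in (box n) ×ˢ (box n), Cop n j g f p) ∧
      (∫ p in (box n) ×ˢ (box n), CopCheck n j f g p) =
        (∫ p in (box n) ×ˢ (box n), CopCheck n j g f p) := by
  intro j
  have hS : MeasurableSet ((box n) ×ˢ (box n)) := (box_meas n).prod (box_meas n)
  have hint1 : ∀ v : Fin j → Fin n, MeasureTheory.IntegrableOn
      (fun p => derivY n (List.ofFn v) f p * derivX n (List.ofFn v) g p)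
      ((box n) ×ˢ (box n)) :=
    fun v => intble_box2 ((smooth_derivY _ hf).continuous.mul (smooth_derivX _ hg).continuous)
  have hint2 : ∀ v : Fin j → Fin n, MeasureTheory.IntegrableOn
      (fun p => derivY n (List.ofFn v) g p * derivX n (List.ofFn v) f p)
      ((box n) ×ˢ (box n)) :=
    fun v => intble_box2 ((smooth_derivY _ hg).continuous.mul (smooth_derivX _ hf).continuous)
  have hint3 : ∀ v : Fin j → Fin n, MeasureTheory.IntegrableOn
      (fun p => derivX n (List.ofFn v) f p * derivY n (List.ofFn v) g p)
      ((box n) ×ˢ (box n)) :=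
    fun v => intble_box2 ((smooth_derivX _ hf).continuous.mul (smooth_derivY _ hg).continuous)
  have hint4 : ∀ v : Fin j → Fin n, MeasureTheory.IntegrableOn
      (fun p => derivX n (List.ofFn v) g p * derivY n (List.ofFn v) f p)
      ((box n) ×ˢ (box n)) :=
    fun v => intble_box2 ((smooth_derivX _ hg).continuous.mul (smooth_derivY _ hf).continuous)
  have key : ∀ v : Fin j → Fin n,
      (∫ p in (box n) ×ˢ (box n), derivY n (List.ofFn v) f p * derivX n (List.ofFn v) g p)
        = ∫ p in (box n) ×ˢ (box n), derivY n (List.ofFn v) g p * derivX n (List.ofFn v) f p := by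
    intro v
    rw [swapL (List.ofFn v) hf hg hperf hperg]
    exact setIntegral_congr_fun hS (fun p _ => mul_comm _ _)
  have key2 : ∀ v : Fin j → Fin n,
      (∫ p in (box n) ×ˢ (box n), derivX n (List.ofFn v) f p * derivY n (List.ofFn v) g p)
        = ∫ p in (box n) ×ˢ (box n), derivX n (List.ofFn v) g p * derivY n (List.ofFn v) f p := by
    intro v
    rw [← swapL (List.ofFn v) hg hf hperg hperf]
    exact setIntegral_congr_fun hS (fun p _ => mul_comm _ _)
  constructor
  · unfold Cop
    rw [MeasureTheory.integral_const_mul, MeasureTheory.integral_const_mul,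
      MeasureTheory.integral_finset_sum _ (fun v _ => hint1 v),
      MeasureTheory.integral_finset_sum _ (fun v _ => hint2 v)]
    exact congrArg _ (Finset.sum_congr rfl (fun v _ => key v))
  · unfold CopCheck
    rw [MeasureTheory.integral_const_mul, MeasureTheory.integral_const_mul,
      MeasureTheory.integral_finset_sum _ (fun v _ => hint3 v),
      MeasureTheory.integral_finset_sum _ (fun v _ => hint4 v)]
    exact congrArg _ (Finset.sum_congr rfl (fun v _ => key2 v))
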